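/- Downward closure of TeamCTL: for every Kripke structure 𝒦, every CTL formula φ, and all teams T, T' of 𝒦, if 𝒦, T ⊨ φ and T' is a sub-multiset of T up to reindexing (T' ⊑ T), then 𝒦, T' ⊨ φ. -/

import Mathlib

namespace TeamCTL

/-- A Kripke structure: a finite set of worlds, a left-total transition relation,
and a labeling function. -/
structure Kripke (AP : Type) where
  W : Type
  [instFin : Fintype W]
  R : W → W → Prop
  leftTotal : ∀ w : W, ∃ w' : W, R w w'
  η : W → Set AP

attribute [instance] Kripke.instFin

/-- CTL formulae in negation normal form. -/
inductive CTL (AP : Type) : Type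
  | atom : AP → CTL AP
  | natom : AP → CTL AP
  | conj : CTL AP → CTL AP → CTL AP
  | disj : CTL AP → CTL AP → CTL AP
  | ex : CTL AP → CTL AP
  | ax : CTL AP → CTL AP
  | eu : CTL AP → CTL AP → CTL AP
  | au : CTL AP → CTL AP → CTL AP
  | er : CTL AP → CTL AP → CTL AP
  | ar : CTL AP → CTL AP → CTL AP

variable {AP : Type}

/-- `π` is a path of `K` starting at the world `w`. -/
def IsPathFrom (K : Kripke AP) (w : K.W) (π : ℕ → K.W) : Prop :=
  π 0 = w ∧ ∀ i : ℕ, K.R (π i) (π (i + 1))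

/-- A team of `K` is a finite multiset of worlds, represented as a list
(the positions of the list play the role of the indices of the indexed multiset;
multiset equality is list permutation).  A `T`-compatible function assigns to
each (indexed) element of the team a path starting at that world. -/
def Compatible (K : Kripke AP) (T : List K.W) (f : Fin T.length → ℕ → K.W) : Prop :=
  ∀ i : Fin T.length, IsPathFrom K (T.get i) (f i)

/-- `T[f,n]`: the team obtained by synchronously proceeding to the `n`-th element
of each chosen path. -/
def step (K : Kripke AP) {T : List K.W} (f : Fin T.length → ℕ → K.W) (n : ℕ) : List K.W :=
  List.ofFn fun i => f i n

/-- Team semantics for CTL: `TSat K φ T` means `K, T ⊨ φ`. -/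
def TSat (K : Kripke AP) : CTL AP → List K.W → Prop
  | .atom p, T => ∀ w ∈ T, p ∈ K.η w
  | .natom p, T => ∀ w ∈ T, p ∉ K.η w
  | .conj φ ψ, T => TSat K φ T ∧ TSat K ψ T
  | .disj φ ψ, T => ∃ T₁ T₂ : List K.W, (T₁ ++ T₂).Perm T ∧ TSat K φ T₁ ∧ TSat K ψ T₂
  | .ex φ, T => ∃ f, Compatible K T f ∧ TSat K φ (step K f 1)
  | .ax φ, T => ∀ f, Compatible K T f → TSat K φ (step K f 1)
  | .eu φ ψ, T => ∃ f, Compatible K T f ∧ ∃ k : ℕ,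
      TSat K ψ (step K f k) ∧ ∀ j : ℕ, 1 ≤ j → j < k → TSat K φ (step K f j)
  | .au φ ψ, T => ∀ f, Compatible K T f → ∃ k : ℕ,
      TSat K ψ (step K f k) ∧ ∀ j : ℕ, 1 ≤ j → j < k → TSat K φ (step K f j)
  | .er φ ψ, T => ∃ f, Compatible K T f ∧ ∀ k : ℕ,
      TSat K ψ (step K f k) ∨ ∃ j : ℕ, 1 ≤ j ∧ j < k ∧ TSat K φ (step K f j)
  | .ar φ ψ, T => ∀ f, Compatible K T f → ∀ k : ℕ,
      TSat K ψ (step K f k) ∨ ∃ j : ℕ, 1 ≤ j ∧ j < k ∧ TSat K φ (step K f j)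

/-- Classical (pointed) semantics for CTL: `CSat K φ w` means `K, w ⊨ φ`. -/
def CSat (K : Kripke AP) : CTL AP → K.W → Prop
  | .atom p, w => p ∈ K.η w
  | .natom p, w => p ∉ K.η w
  | .conj φ ψ, w => CSat K φ w ∧ CSat K ψ w
  | .disj φ ψ, w => CSat K φ w ∨ CSat K ψ w
  | .ex φ, w => ∃ π, IsPathFrom K w π ∧ CSat K φ (π 1)
  | .ax φ, w => ∀ π, IsPathFrom K w π → CSat K φ (π 1)
  | .eu φ ψ, w => ∃ π, IsPathFrom K w π ∧ ∃ k : ℕ, CSat K ψ (π k) ∧ ∀ j < k, CSat K φ (π j)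
  | .au φ ψ, w => ∀ π, IsPathFrom K w π → ∃ k : ℕ, CSat K ψ (π k) ∧ ∀ j < k, CSat K φ (π j)
  | .er φ ψ, w => ∃ π, IsPathFrom K w π ∧ ∀ k : ℕ, CSat K ψ (π k) ∨ ∃ j < k, CSat K φ (π j)
  | .ar φ ψ, w => ∀ π, IsPathFrom K w π → ∀ k : ℕ, CSat K ψ (π k) ∨ ∃ j < k, CSat K φ (π j)

open Function

theorem emb_of_perm {α : Type*} {l₁ l₂ : List α} (h : l₁.Perm l₂) :
    ∃ g : Fin l₁.length → Fin l₂.length, Injective g ∧ ∀ i, l₁.get i = l₂.get (g i) := by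
  induction h with
  | nil => exact ⟨id, injective_id, fun i => i.elim0⟩
  | @cons x t₁ t₂ h ih =>
      obtain ⟨g, hinj, hget⟩ := ih
      refine ⟨fun i => Fin.cases (⟨0, Nat.succ_pos _⟩ : Fin (t₂.length + 1))
        (fun j => (g j).succ) i, ?_, ?_⟩
      · intro a b hab
        induction a using Fin.cases with
        | zero =>
          induction b using Fin.cases with
          | zero => rfl
          | succ b => exact absurd (congrArg Fin.val hab) (by simp)
        | succ a =>
          induction b using Fin.cases with
          | zero => exact absurd (congrArg Fin.val hab) (by simp)
          | succ b =>
            simp only [Fin.cases_succ] at hab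
            rw [hinj (Fin.succ_injective _ hab)]
      · intro i
        induction i using Fin.cases with
        | zero => rfl
        | succ j => simpa using hget j
  | swap x y l =>
      refine ⟨fun i => if i.val = 0 then ⟨1, by simp⟩ else if i.val = 1 then ⟨0, by simp⟩
        else i, ?_, ?_⟩
      · intro a b hab
        rcases a with ⟨(_ | _ | n), ha⟩ <;> rcases b with ⟨(_ | _ | m), hb⟩ <;>
          simp_all [Fin.ext_iff]
      · rintro ⟨(_ | _ | n), hn⟩ <;> rfl
  | trans h₁ h₂ ih₁ ih₂ =>
      obtain ⟨g₁, hinj₁, hget₁⟩ := ih₁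
      obtain ⟨g₂, hinj₂, hget₂⟩ := ih₂
      exact ⟨g₂ ∘ g₁, hinj₂.comp hinj₁, fun i => (hget₁ i).trans (hget₂ _)⟩

theorem emb_of_subperm {α : Type*} {l₁ l₂ : List α} (h : l₁.Subperm l₂) :
    ∃ g : Fin l₁.length → Fin l₂.length, Injective g ∧ ∀ i, l₁.get i = l₂.get (g i) := by
  obtain ⟨l, hp, hs⟩ := h
  obtain ⟨g₁, hinj₁, hget₁⟩ := emb_of_perm hp.symm
  obtain ⟨e, he⟩ := List.sublist_iff_exists_fin_orderEmbedding_get_eq.mp hs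
  exact ⟨fun i => e (g₁ i), fun a b hab => hinj₁ (e.injective hab),
    fun i => (hget₁ i).trans (he _)⟩

theorem count_eq_card {α : Type*} [DecidableEq α] (l : List α) (a : α) :
    l.count a = (Finset.univ.filter fun i : Fin l.length => l.get i = a).card := by
  induction l with
  | nil => simp
  | cons b l ih =>
      rw [Finset.card_filter] at ih ⊢
      show List.count a (b :: l) = ∑ i : Fin (l.length + 1), _
      rw [Fin.sum_univ_succ, List.count_cons, ih]
      simp [add_comm]
      split_ifs <;> simp_all

theorem subperm_of_emb {α : Type*} {l₁ l₂ : List α}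
    (g : Fin l₁.length → Fin l₂.length) (hinj : Injective g)
    (hget : ∀ i, l₁.get i = l₂.get (g i)) : l₁.Subperm l₂ := by
  classical
  rw [List.subperm_ext_iff]
  intro a _
  rw [count_eq_card, count_eq_card]
  apply Finset.card_le_card_of_injOn g
  · intro i hi
    simp only [Finset.mem_coe, Finset.mem_filter, Finset.mem_univ, true_and] at *
    rw [← hget]; exact hi
  · exact hinj.injOn


/-- An arbitrary path from any world, using left-totality. -/
noncomputable def somePath (K : Kripke AP) (w : K.W) : ℕ → K.W
  | 0 => w
  | n + 1 => Classical.choose (K.leftTotal (somePath K w n))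

theorem somePath_isPathFrom (K : Kripke AP) (w : K.W) :
    IsPathFrom K w (somePath K w) :=
  ⟨rfl, fun _ => Classical.choose_spec (K.leftTotal _)⟩

theorem step_subperm (K : Kripke AP) {T T' : List K.W}
    (g : Fin T'.length → Fin T.length) (hinj : Injective g)
    (f : Fin T.length → ℕ → K.W) (n : ℕ) :
    (step K (fun i => f (g i)) n).Subperm (step K f n) := by
  apply subperm_of_emb
    (g := fun i => Fin.cast (List.length_ofFn).symm
      (g (Fin.cast (List.length_ofFn) i)))
  · intro a b hab
    have h1 := hinj (Fin.cast_injective _ hab)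
    exact Fin.cast_injective _ h1
  · intro i
    simp only [step, List.get_ofFn]
    rfl


/-- `EF φ := E[(p ∨ ¬p) U φ]`. -/
def EF (p : AP) (φ : CTL AP) : CTL AP := .eu (.disj (.atom p) (.natom p)) φ

/-- Downward closure of TeamCTL: if `𝒦,T ⊨ φ` and `T'` is a
sub-multiset of `T` up to reindexing (here: `T'` is a subpermutation of the
list `T`), then `𝒦,T' ⊨ φ`. -/
theorem downward_closure (K : Kripke ℕ) (φ : CTL ℕ) (T T' : List K.W)
    (h : TSat K φ T) (hsub : T'.Subperm T) :
    TSat K φ T' := by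
  classical
  induction φ generalizing T T' with
  | atom p => exact fun w hw => h w (hsub.subset hw)
  | natom p => exact fun w hw => h w (hsub.subset hw)
  | conj φ ψ ihφ ihψ => exact ⟨ihφ _ _ h.1 hsub, ihψ _ _ h.2 hsub⟩
  | disj φ ψ ihφ ihψ =>
      obtain ⟨T₁, T₂, hperm, h₁, h₂⟩ := h
      have hle : (↑T' : Multiset K.W) ≤ ↑T₁ + ↑T₂ := by
        have h1 : (↑T' : Multiset K.W) ≤ ↑T := hsub
        have h2 : ((T₁ ++ T₂ : List K.W) : Multiset K.W) = ↑T :=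
          Multiset.coe_eq_coe.mpr hperm
        rw [← h2, ← Multiset.coe_add] at h1
        exact h1
      set s₁ : Multiset K.W := ↑T' ∩ ↑T₁ with hs₁
      set s₂ : Multiset K.W := ↑T' - ↑T₁ with hs₂
      have hsum : s₁ + s₂ = ↑T' := by
        rw [hs₁, hs₂]
        ext a
        simp only [Multiset.count_add, Multiset.count_inter, Multiset.count_sub]
        omega
      have h2 : s₁ ≤ ↑T₁ := Multiset.inter_le_right
      have h3 : s₂ ≤ ↑T₂ := by
        rw [hs₂, Multiset.sub_le_iff_le_add]
        rwa [add_comm] at hle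
      refine ⟨s₁.toList, s₂.toList, ?_, ihφ _ _ h₁ ?_, ihψ _ _ h₂ ?_⟩
      · rw [← Multiset.coe_eq_coe, ← Multiset.coe_add, Multiset.coe_toList,
          Multiset.coe_toList, hsum]
      · rw [← Multiset.coe_le, Multiset.coe_toList]
        exact h2
      · rw [← Multiset.coe_le, Multiset.coe_toList]
        exact h3
  | ex φ ih =>
      obtain ⟨f, hc, hφ⟩ := h
      obtain ⟨g, hinj, hget⟩ := emb_of_subperm hsub
      exact ⟨fun i => f (g i), fun i => by rw [hget]; exact hc (g i),
        ih _ _ hφ (step_subperm K g hinj f 1)⟩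
  | ax φ ih =>
      intro f' hc'
      obtain ⟨g, hinj, hget⟩ := emb_of_subperm hsub
      set f : Fin T.length → ℕ → K.W :=
        fun i => if hx : ∃ j, g j = i then f' hx.choose
          else somePath K (T.get i) with hf
      have hcomp : Compatible K T f := by
        intro i
        by_cases hx : ∃ j, g j = i
        · simp only [hf, dif_pos hx]
          have := hc' hx.choose
          rwa [hget, hx.choose_spec] at this
        · simp only [hf, dif_neg hx]
          exact somePath_isPathFrom K _
      have hfg : (fun j => f (g j)) = f' := by
        funext j
        have hx : ∃ j', g j' = g j := ⟨j, rfl⟩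
        simp only [hf, dif_pos hx]
        exact congrArg f' (hinj hx.choose_spec)
      have hstep := step_subperm K g hinj f 1
      rw [hfg] at hstep
      exact ih _ _ (h f hcomp) hstep
  | eu φ ψ ihφ ihψ =>
      obtain ⟨f, hc, k, hψ, hφ⟩ := h
      obtain ⟨g, hinj, hget⟩ := emb_of_subperm hsub
      exact ⟨fun i => f (g i), fun i => by rw [hget]; exact hc (g i), k,
        ihψ _ _ hψ (step_subperm K g hinj f k),
        fun j h1 h2 => ihφ _ _ (hφ j h1 h2) (step_subperm K g hinj f j)⟩
  | au φ ψ ihφ ihψ =>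
      intro f' hc'
      obtain ⟨g, hinj, hget⟩ := emb_of_subperm hsub
      set f : Fin T.length → ℕ → K.W :=
        fun i => if hx : ∃ j, g j = i then f' hx.choose
          else somePath K (T.get i) with hf
      have hcomp : Compatible K T f := by
        intro i
        by_cases hx : ∃ j, g j = i
        · simp only [hf, dif_pos hx]
          have := hc' hx.choose
          rwa [hget, hx.choose_spec] at this
        · simp only [hf, dif_neg hx]
          exact somePath_isPathFrom K _
      have hfg : (fun j => f (g j)) = f' := by
        funext j
        have hx : ∃ j', g j' = g j := ⟨j, rfl⟩
        simp only [hf, dif_pos hx]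
        exact congrArg f' (hinj hx.choose_spec)
      obtain ⟨k, hψ, hφ⟩ := h f hcomp
      refine ⟨k, ?_, fun j h1 h2 => ?_⟩
      · have hstep := step_subperm K g hinj f k
        rw [hfg] at hstep
        exact ihψ _ _ hψ hstep
      · have hstep := step_subperm K g hinj f j
        rw [hfg] at hstep
        exact ihφ _ _ (hφ j h1 h2) hstep
  | er φ ψ ihφ ihψ =>
      obtain ⟨f, hc, hk⟩ := h
      obtain ⟨g, hinj, hget⟩ := emb_of_subperm hsub
      refine ⟨fun i => f (g i), fun i => by rw [hget]; exact hc (g i), fun k => ?_⟩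
      rcases hk k with hψ | ⟨j, h1, h2, hφ⟩
      · exact Or.inl (ihψ _ _ hψ (step_subperm K g hinj f k))
      · exact Or.inr ⟨j, h1, h2, ihφ _ _ hφ (step_subperm K g hinj f j)⟩
  | ar φ ψ ihφ ihψ =>
      intro f' hc' k
      obtain ⟨g, hinj, hget⟩ := emb_of_subperm hsub
      set f : Fin T.length → ℕ → K.W :=
        fun i => if hx : ∃ j, g j = i then f' hx.choose
          else somePath K (T.get i) with hf
      have hcomp : Compatible K T f := by
        intro i
        by_cases hx : ∃ j, g j = i
        · simp only [hf, dif_pos hx]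
          have := hc' hx.choose
          rwa [hget, hx.choose_spec] at this
        · simp only [hf, dif_neg hx]
          exact somePath_isPathFrom K _
      have hfg : (fun j => f (g j)) = f' := by
        funext j
        have hx : ∃ j', g j' = g j := ⟨j, rfl⟩
        simp only [hf, dif_pos hx]
        exact congrArg f' (hinj hx.choose_spec)
      rcases h f hcomp k with hψ | ⟨j, h1, h2, hφ⟩
      · have hstep := step_subperm K g hinj f k
        rw [hfg] at hstep
        exact Or.inl (ihψ _ _ hψ hstep)
      · have hstep := step_subperm K g hinj f j
        rw [hfg] at hstep
        exact Or.inr ⟨j, h1, h2, ihφ _ _ hφ hstep⟩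

end TeamCTL
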